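/- Let a = (1,0,0), b = (0,1,0), c = (c₁,c₂,c₃), d = (d₁,d₂,d₃) be vectors in ℝ³ satisfying: a·c + b·d = 0, a·d − b·c = 0, |a| = |b|, |c| = |d|, a·b = 0, c·d = 0, and c ≠ 0. Then c₃ = 0 and d₃ = 0, and moreover c = (c₁, c₂, 0), d = (c₂, −c₁, 0). -/
import Mathlib


open scoped RealInnerProductSpace

/-- The n = 3 case of Corollary 1.4: the obstruction relations together with
weak conformality force `c₃ = d₃ = 0` and `d = (c₂, −c₁, 0)`. -/
theorem stmt1 (a b c d : EuclideanSpace ℝ (Fin 3))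
    (ha0 : a 0 = 1) (ha1 : a 1 = 0) (ha2 : a 2 = 0)
    (hb0 : b 0 = 0) (hb1 : b 1 = 1) (hb2 : b 2 = 0)
    (h1 : ⟪a, c⟫ + ⟪b, d⟫ = 0)
    (h2 : ⟪a, d⟫ - ⟪b, c⟫ = 0)
    (hab : ‖a‖ = ‖b‖) (hcd : ‖c‖ = ‖d‖)
    (hab' : ⟪a, b⟫ = 0) (hcd' : ⟪c, d⟫ = 0)
    (hc : c ≠ 0) :
    c 2 = 0 ∧ d 2 = 0 ∧ d 0 = c 1 ∧ d 1 = -(c 0) := by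
  have hcd2 : ⟪c, c⟫ = ⟪d, d⟫ := by
    rw [real_inner_self_eq_norm_sq, real_inner_self_eq_norm_sq, hcd]
  simp only [PiLp.inner_apply, RCLike.inner_apply, conj_trivial,
    Fin.sum_univ_three, ha0, ha1, ha2, hb0, hb1, hb2] at h1 h2 hcd' hcd2
  have hd0 : d 0 = c 1 := by linarith
  have hd1 : d 1 = -(c 0) := by linarith
  rw [hd0, hd1] at hcd' hcd2
  have h : c 2 * c 2 = d 2 * d 2 := by linarith
  have h0 : c 2 * d 2 = 0 := by linarith
  have h4 : (c 2 * c 2) * (c 2 * c 2) = 0 := by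
    linear_combination (c 2 * c 2) * h + (c 2 * d 2) * h0
  have hc2 : c 2 = 0 := by
    have := mul_self_eq_zero.mp (mul_self_eq_zero.mp h4)
    exact this
  have hd2 : d 2 = 0 := by
    have := h; rw [hc2] at this
    nlinarith [this]
  exact ⟨hc2, hd2, hd0, hd1⟩
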